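/- For every n ≥ 1, the subgroup ⟨S_n({132, 213, 321})⟩ of S_n is isomorphic to the cyclic group ℤ_n of order n; indeed, S_n({132, 213, 321}) consists exactly of the powers of the n-cycle (1,2,…,n). -/

import Mathlib

/-- A permutation `π ∈ S_n` contains the pattern `τ ∈ S_k` if there is a strictly
increasing `f : Fin k → Fin n` such that `τ a < τ b ↔ π (f a) < π (f b)`. -/
def PermContains {k n : ℕ} (τ : Equiv.Perm (Fin k)) (π : Equiv.Perm (Fin n)) : Prop :=
  ∃ f : Fin k → Fin n, StrictMono f ∧ ∀ a b : Fin k, τ a < τ b ↔ π (f a) < π (f b)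

/-- `avoidSet n T` is `S_n(T)`: the permutations of `Fin n` avoiding every pattern in `T`,
where `T` is a set of permutations of arbitrary lengths. -/
def avoidSet (n : ℕ) (T : Set (Σ k : ℕ, Equiv.Perm (Fin k))) : Set (Equiv.Perm (Fin n)) :=
  {π | ∀ τ ∈ T, ¬ PermContains τ.2 π}
/-- The pattern 132. -/
def p132 : Equiv.Perm (Fin 3) := Equiv.swap 1 2
/-- The pattern 213. -/
def p213 : Equiv.Perm (Fin 3) := Equiv.swap 0 1
/-- The pattern 321. -/
def p321 : Equiv.Perm (Fin 3) := Equiv.swap 0 2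

section aux

open Fin.NatCast

variable {n : ℕ}

lemma strictMono3' {a b c : Fin n} (hab : a < b) (hbc : b < c) :
    StrictMono ![a, b, c] := by
  intro i j hij
  fin_cases i <;> fin_cases j <;>
    simp_all [Fin.mk_zero, Fin.mk_one,
      show ((⟨2, by omega⟩ : Fin 3)) = 2 from rfl] <;>
    exact hab.trans hbc

lemma contains132 (π : Equiv.Perm (Fin n)) {a b c : Fin n} (hab : a < b) (hbc : b < c)
    (h1 : π a < π c) (h2 : π c < π b) : PermContains p132 π := by
  refine ⟨![a, b, c], strictMono3' hab hbc, ?_⟩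
  intro i j
  fin_cases i <;> fin_cases j <;>
    simp_all [p132, Fin.mk_zero, Fin.mk_one, Equiv.swap_apply_def,
      show ((⟨2, by omega⟩ : Fin 3)) = 2 from rfl] <;>
    (first | exact h1.trans h2 | exact (h1.trans h2).le | exact h1.le | exact h2.le)

lemma contains213 (π : Equiv.Perm (Fin n)) {a b c : Fin n} (hab : a < b) (hbc : b < c)
    (h1 : π b < π a) (h2 : π a < π c) : PermContains p213 π := by
  refine ⟨![a, b, c], strictMono3' hab hbc, ?_⟩
  intro i j
  fin_cases i <;> fin_cases j <;>
    simp_all [p213, Fin.mk_zero, Fin.mk_one, Equiv.swap_apply_def,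
      show ((⟨2, by omega⟩ : Fin 3)) = 2 from rfl] <;>
    (first | exact h1.trans h2 | exact (h1.trans h2).le | exact h1.le | exact h2.le)

lemma contains321 (π : Equiv.Perm (Fin n)) {a b c : Fin n} (hab : a < b) (hbc : b < c)
    (h1 : π c < π b) (h2 : π b < π a) : PermContains p321 π := by
  refine ⟨![a, b, c], strictMono3' hab hbc, ?_⟩
  intro i j
  fin_cases i <;> fin_cases j <;>
    simp_all [p321, Fin.mk_zero, Fin.mk_one, Equiv.swap_apply_def,
      show ((⟨2, by omega⟩ : Fin 3)) = 2 from rfl] <;>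
    (first | exact h1.trans h2 | exact (h1.trans h2).le | exact h1.le | exact h2.le)

lemma rot_pow {m : ℕ} (j : ℕ) (k : Fin (m + 1)) :
    ((finRotate (m + 1)) ^ j) k = k + (j : Fin (m + 1)) := by
  induction j with
  | zero => simp
  | succ j ih =>
    rw [pow_succ', Equiv.Perm.mul_apply, ih, finRotate_succ_apply]
    push_cast
    abel

lemma modfact {N x : ℕ} (hN : 0 < N) (hx : x < 2 * N) :
    (x % N = x ∧ x < N) ∨ (x % N + N = x ∧ N ≤ x) := by
  rcases Nat.lt_or_ge x N with h | h
  · exact Or.inl ⟨Nat.mod_eq_of_lt h, h⟩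
  · refine Or.inr ⟨?_, h⟩
    rw [Nat.mod_eq_sub_mod h, Nat.mod_eq_of_lt (by omega)]
    omega

/-- The step lemma: an avoider satisfies `π (i+1) = π i + 1` at non-wrap positions. -/
lemma step_lemma {m : ℕ} (π : Equiv.Perm (Fin (m + 1)))
    (h132 : ¬ PermContains p132 π) (h213 : ¬ PermContains p213 π)
    (h321 : ¬ PermContains p321 π) {i : Fin (m + 1)} (hi : (i : ℕ) < m) :
    π (i + 1) = π i + 1 := by
  have hm : 1 < m + 1 := by omega
  have h1v : ((1 : Fin (m + 1)) : ℕ) = 1 := by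
    simp [Fin.val_one', Nat.mod_eq_of_lt hm]
  have hii : ((i + 1 : Fin (m + 1)) : ℕ) = (i : ℕ) + 1 := by
    simp [Fin.add_def, h1v, Nat.mod_eq_of_lt (by omega : (i : ℕ) + 1 < m + 1)]
  have hlt : i < i + 1 := by rw [Fin.lt_def, hii]; omega
  have hane : π i ≠ π (i + 1) := fun h => absurd (π.injective h) hlt.ne
  set a := ((π i : Fin (m+1)) : ℕ) with ha
  set b := ((π (i + 1) : Fin (m+1)) : ℕ) with hb
  have haltn : a < m + 1 := (π i).isLt
  have hbltn : b < m + 1 := (π (i + 1)).isLt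
  have habne : a ≠ b := fun h => hane (Fin.ext h)
  rw [Fin.ext_iff]
  have hr : ((π i + 1 : Fin (m + 1)) : ℕ) = (a + 1) % (m + 1) := by
    rw [Fin.add_def, h1v]
  rw [hr, ← hb]
  -- goal is now `b = (a + 1) % (m + 1)`
  by_cases hc1 : b = a + 1
  · rw [Nat.mod_eq_of_lt (by omega)]
    exact hc1
  by_cases hc2 : a = m ∧ b = 0
  · rw [hc2.1, Nat.mod_self]
    exact hc2.2
  exfalso
  -- the position finder
  have key : ∀ v : Fin (m + 1), (v : ℕ) ≠ a → (v : ℕ) ≠ b →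
      (π.symm v < i ∧ π (π.symm v) = v) ∨ (i + 1 < π.symm v ∧ π (π.symm v) = v) := by
    intro v hva hvb
    have hpv : π (π.symm v) = v := π.apply_symm_apply v
    have hxi : π.symm v ≠ i := by
      intro h; rw [h] at hpv; exact hva (congrArg Fin.val hpv).symm
    have hxi1 : π.symm v ≠ i + 1 := by
      intro h; rw [h] at hpv; exact hvb (congrArg Fin.val hpv).symm
    have hv1 : ((π.symm v : Fin (m+1)) : ℕ) ≠ (i : ℕ) := fun h => hxi (Fin.ext h)
    have hv2 : ((π.symm v : Fin (m+1)) : ℕ) ≠ (i : ℕ) + 1 := by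
      intro h; exact hxi1 (Fin.ext (by rw [hii]; exact h))
    rcases Nat.lt_or_ge ((π.symm v : Fin (m+1)) : ℕ) (i : ℕ) with h | h
    · exact Or.inl ⟨h, hpv⟩
    · refine Or.inr ⟨?_, hpv⟩
      rw [Fin.lt_def, hii]
      omega
  rcases Nat.lt_or_ge a b with hab | hab
  · -- a < b, and b ≠ a + 1, so a + 1 < b; take v with value a + 1
    have hvb : a + 1 < b := by omega
    set v : Fin (m + 1) := ⟨a + 1, by omega⟩ with hv
    rcases key v (by simp [hv]) (by simp [hv]; omega) with ⟨hx, hpv⟩ | ⟨hx, hpv⟩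
    · -- positions π.symm v < i < i+1 ; values a+1, a, b : pattern 213
      exact h213 (contains213 π hx hlt
        (by rw [hpv, Fin.lt_def]; exact Nat.lt_succ_self a)
        (by rw [hpv, Fin.lt_def]; simpa [hv] using hvb))
    · -- positions i < i+1 < π.symm v ; values a, b, a+1 : pattern 132
      exact h132 (contains132 π hlt hx
        (by rw [hpv, Fin.lt_def]; exact Nat.lt_succ_self a)
        (by rw [hpv, Fin.lt_def]; simpa [hv] using hvb))
  · have hba : b < a := by omega
    by_cases ham : a < m
    · -- take v with value a + 1 > a > b
      set v : Fin (m + 1) := ⟨a + 1, by omega⟩ with hv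
      rcases key v (by simp [hv]) (by simp [hv]; omega) with ⟨hx, hpv⟩ | ⟨hx, hpv⟩
      · -- positions π.symm v < i < i+1 ; values a+1 > a > b : pattern 321
        exact h321 (contains321 π hx hlt
          (by rw [Fin.lt_def]; exact hba)
          (by rw [hpv, Fin.lt_def]; exact Nat.lt_succ_self a))
      · -- positions i < i+1 < π.symm v ; values a, b, a+1 : pattern 213
        exact h213 (contains213 π hlt hx
          (by rw [Fin.lt_def]; exact hba)
          (by rw [hpv, Fin.lt_def]; exact Nat.lt_succ_self a))
    · -- a = m, so b ≠ 0 ; take v with value b - 1 < b < a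
      have hbne : b ≠ 0 := fun h => hc2 ⟨by omega, h⟩
      set v : Fin (m + 1) := ⟨b - 1, by omega⟩ with hv
      rcases key v (by simp [hv]; omega) (by simp [hv]; omega) with ⟨hx, hpv⟩ | ⟨hx, hpv⟩
      · -- positions π.symm v < i < i+1 ; values b-1, a, b : pattern 132
        exact h132 (contains132 π hx hlt
          (by rw [hpv, Fin.lt_def]; simp [hv]; omega)
          (by rw [Fin.lt_def]; exact hba))
      · -- positions i < i+1 < π.symm v ; values a, b, b-1 : pattern 321
        exact h321 (contains321 π hlt hx
          (by rw [hpv, Fin.lt_def]; simp [hv]; omega)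
          (by rw [Fin.lt_def]; exact hba))

/-- Avoiders are powers of the rotation. -/
lemma avoider_is_power {m : ℕ} (π : Equiv.Perm (Fin (m + 1)))
    (h132 : ¬ PermContains p132 π) (h213 : ¬ PermContains p213 π)
    (h321 : ¬ PermContains p321 π) :
    π = (finRotate (m + 1)) ^ ((π 0 : Fin (m+1)) : ℕ) := by
  have key : ∀ j : ℕ, ∀ hj : j < m + 1, π ⟨j, hj⟩ = π 0 + ⟨j, hj⟩ := by
    intro j
    induction j with
    | zero => intro hj; simp
    | succ j ih =>
      intro hj
      have hj' : j < m + 1 := by omega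
      have hstep := step_lemma π h132 h213 h321 (i := ⟨j, hj'⟩) (by simpa using by omega)
      have hadd : (⟨j, hj'⟩ : Fin (m + 1)) + 1 = ⟨j + 1, hj⟩ := by
        rw [Fin.ext_iff, Fin.add_def, Fin.val_one']
        simp [Nat.mod_eq_of_lt (show 1 < m + 1 by omega), Nat.mod_eq_of_lt hj]
      rw [← hadd, hstep, ih hj', add_assoc]
  ext k
  rw [rot_pow, Fin.cast_val_eq_self (π 0)]
  have hk := key (k : ℕ) k.isLt
  simp only [Fin.eta] at hk
  exact congrArg Fin.val (hk.trans (add_comm _ _))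

/-- Powers of the rotation avoid the three patterns. -/
lemma power_avoids {m j : ℕ} {τ : Equiv.Perm (Fin 3)}
    (hτ : τ = p132 ∨ τ = p213 ∨ τ = p321) :
    ¬ PermContains τ ((finRotate (m + 1)) ^ j) := by
  rintro ⟨f, hf, hiff⟩
  set ρ := (finRotate (m + 1)) ^ j with hρ
  have h01 : f 0 < f 1 := hf (by decide)
  have h12 : f 1 < f 2 := hf (by decide)
  set J := j % (m + 1) with hJ
  have hJlt : J < m + 1 := Nat.mod_lt _ (Nat.succ_pos m)
  have hval : ∀ k : Fin 3, ((ρ (f k) : Fin (m+1)) : ℕ) = ((f k : ℕ) + J) % (m + 1) := by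
    intro k
    rw [hρ, rot_pow, Fin.add_def, Fin.val_natCast]
  have hm0 := modfact (x := (f 0 : ℕ) + J) (Nat.succ_pos m) (by omega)
  have hm1 := modfact (x := (f 1 : ℕ) + J) (Nat.succ_pos m) (by omega)
  have hm2 := modfact (x := (f 2 : ℕ) + J) (Nat.succ_pos m) (by omega)
  rw [← hval 0] at hm0
  rw [← hval 1] at hm1
  rw [← hval 2] at hm2
  have hx01 : (f 0 : ℕ) < (f 1 : ℕ) := h01
  have hx12 : (f 1 : ℕ) < (f 2 : ℕ) := h12
  have hx2 : (f 2 : ℕ) < m + 1 := (f 2).isLt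
  rcases hτ with rfl | rfl | rfl
  · -- 132 : v0 < v2 < v1
    have e1 : ρ (f 0) < ρ (f 2) := (hiff 0 2).mp (by decide)
    have e2 : ρ (f 2) < ρ (f 1) := (hiff 2 1).mp (by decide)
    rw [Fin.lt_def] at e1 e2
    omega
  · -- 213 : v1 < v0 < v2
    have e1 : ρ (f 1) < ρ (f 0) := (hiff 1 0).mp (by decide)
    have e2 : ρ (f 0) < ρ (f 2) := (hiff 0 2).mp (by decide)
    rw [Fin.lt_def] at e1 e2
    omega
  · -- 321 : v2 < v1 < v0
    have e1 : ρ (f 1) < ρ (f 0) := (hiff 1 0).mp (by decide)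
    have e2 : ρ (f 2) < ρ (f 1) := (hiff 2 1).mp (by decide)
    rw [Fin.lt_def] at e1 e2
    omega

lemma isCyclic_zpowers {G : Type*} [Group G] (g : G) : IsCyclic (Subgroup.zpowers g) := by
  refine ⟨⟨⟨g, Subgroup.mem_zpowers g⟩, ?_⟩⟩
  rintro ⟨x, hx⟩
  obtain ⟨k, hk⟩ := Subgroup.mem_zpowers_iff.mp hx
  exact ⟨k, Subtype.ext (by simpa using hk)⟩

lemma orderOf_finRotate' (m : ℕ) : orderOf (finRotate (m + 1)) = m + 1 := by
  rw [orderOf_eq_iff (Nat.succ_pos m)]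
  constructor
  · ext k
    rw [rot_pow]
    simp
  · intro k hk hk0 h1
    have h0 : ((finRotate (m + 1)) ^ k) 0 = (1 : Equiv.Perm (Fin (m + 1))) 0 := by rw [h1]
    rw [rot_pow, zero_add] at h0
    have hval := congrArg Fin.val h0
    rw [Fin.val_natCast, Nat.mod_eq_of_lt hk] at hval
    simp at hval
    omega

end aux

theorem avoid_132_213_321_cyclic (n : ℕ) (hn : 1 ≤ n) :
    avoidSet n ({⟨3, p132⟩, ⟨3, p213⟩, ⟨3, p321⟩} : Set (Σ k : ℕ, Equiv.Perm (Fin k))) =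
      {π : Equiv.Perm (Fin n) | ∃ j : ℕ, π = (finRotate n) ^ j} ∧
    Nonempty (Subgroup.closure
      (avoidSet n ({⟨3, p132⟩, ⟨3, p213⟩, ⟨3, p321⟩} : Set (Σ k : ℕ, Equiv.Perm (Fin k)))) ≃*
        Multiplicative (ZMod n)) := by
  obtain ⟨m, rfl⟩ : ∃ m, n = m + 1 := ⟨n - 1, by omega⟩
  have hset : avoidSet (m + 1) ({⟨3, p132⟩, ⟨3, p213⟩, ⟨3, p321⟩} :
      Set (Σ k : ℕ, Equiv.Perm (Fin k))) =
      {π : Equiv.Perm (Fin (m + 1)) | ∃ j : ℕ, π = (finRotate (m + 1)) ^ j} := by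
    ext π
    constructor
    · intro h
      have h132 : ¬ PermContains p132 π := h ⟨3, p132⟩ (Or.inl rfl)
      have h213 : ¬ PermContains p213 π := h ⟨3, p213⟩ (Or.inr (Or.inl rfl))
      have h321 : ¬ PermContains p321 π := h ⟨3, p321⟩ (Or.inr (Or.inr rfl))
      exact ⟨_, avoider_is_power π h132 h213 h321⟩
    · rintro ⟨j, rfl⟩ τ hτ
      simp only [Set.mem_insert_iff, Set.mem_singleton_iff] at hτ
      rcases hτ with rfl | rfl | rfl
      · exact power_avoids (Or.inl rfl)
      · exact power_avoids (Or.inr (Or.inl rfl))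
      · exact power_avoids (Or.inr (Or.inr rfl))
  refine ⟨hset, ?_⟩
  rw [hset]
  have hgen : Subgroup.closure
      {π : Equiv.Perm (Fin (m + 1)) | ∃ j : ℕ, π = (finRotate (m + 1)) ^ j} =
      Subgroup.zpowers (finRotate (m + 1)) := by
    apply le_antisymm
    · rw [Subgroup.closure_le]
      rintro x ⟨j, rfl⟩
      exact Subgroup.pow_mem _ (Subgroup.mem_zpowers _) j
    · rw [Subgroup.zpowers_le]
      exact Subgroup.subset_closure ⟨1, (pow_one _).symm⟩
  rw [hgen]
  have hcyc := isCyclic_zpowers (finRotate (m + 1))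
  have hcard : Nat.card (Subgroup.zpowers (finRotate (m + 1))) =
      Nat.card (Multiplicative (ZMod (m + 1))) := by
    rw [Nat.card_zpowers, orderOf_finRotate',
      Nat.card_congr Multiplicative.toAdd, Nat.card_zmod]
  exact ⟨mulEquivOfCyclicCardEq hcard⟩
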